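/- arXiv:2401.15838 — 4 statements merged into one kernel-verified Lean document; each statement's English description precedes it below -/
import Mathlib

section
/- Let M₊, M₋ be real n × m matrices, let ρ > 0, and define L₊ = (1/2)·M₊·M₊ᵀ, L₋ = (1/2)·M₋·M₋ᵀ, and D = (1/2)·(L₊ + L₋). Let g, w, X, X′ ∈ ℝⁿ and Z, Z′, β, β′ ∈ ℝᵐ satisfy: (i) g + M₋β′ + √2·D·w = ρ·M₊·(Z − Z′); (ii) β′ = β + (ρ/2)·M₋ᵀ·X′; (iii) Z = (1/2)·M₊ᵀ·X; (iv) Z′ = (1/2)·M₊ᵀ·X′. Then, setting p = M₋β and p′ = M₋β′, it holds that g + p − ρ·L₊·X + 2ρ·D·X′ + √2·D·w = 0 and p′ = p + ρ·L₋·X′. -/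
open Matrix
theorem stmt_3 {n m : ℕ} (Mp Mm : Matrix (Fin n) (Fin m) ℝ) (ρ : ℝ) (hρ : 0 < ρ)
    (Lp Lm D : Matrix (Fin n) (Fin n) ℝ)
    (hLp : Lp = (1 / 2 : ℝ) • (Mp * Mpᵀ))
    (hLm : Lm = (1 / 2 : ℝ) • (Mm * Mmᵀ))
    (hD : D = (1 / 2 : ℝ) • (Lp + Lm))
    (g w X X' : Fin n → ℝ) (Z Z' β β' : Fin m → ℝ)
    (hi : g + Mm.mulVec β' + Real.sqrt 2 • D.mulVec w = ρ • Mp.mulVec (Z - Z'))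
    (hii : β' = β + (ρ / 2) • Mmᵀ.mulVec X')
    (hiii : Z = (1 / 2 : ℝ) • Mpᵀ.mulVec X)
    (hiv : Z' = (1 / 2 : ℝ) • Mpᵀ.mulVec X')
    (p p' : Fin n → ℝ) (hp : p = Mm.mulVec β) (hp' : p' = Mm.mulVec β') :
    g + p - ρ • Lp.mulVec X + (2 * ρ) • D.mulVec X' + Real.sqrt 2 • D.mulVec w = 0 ∧
      p' = p + ρ • Lm.mulVec X' := by
  subst hLp hLm hD hii hiii hiv hp hp'
  simp only [mulVec_add, mulVec_sub, mulVec_smul, smul_mulVec, ← mulVec_mulVec,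
    add_mulVec, smul_add, smul_sub, smul_smul] at hi ⊢
  constructor
  · linear_combination (norm := module) hi
  · module
end

section
/- Let M₊, M₋ be real n × m matrices, ρ > 0, m_f > 0, and let h, X′, X*, v ∈ ℝⁿ and Z, Z′, Z*, β, β′, β* ∈ ℝᵐ satisfy: (i) ⟨h, X′ − X*⟩ ≥ m_f‖X′ − X*‖²; (ii) h = ρ·M₊·(Z − Z′) − M₋·(β′ − β*) − √2·v; (iii) β′ − β = (ρ/2)·M₋ᵀ·(X′ − X*); (iv) Z′ − Z* = (1/2)·M₊ᵀ·(X′ − X*). Define the G-norm on pairs of vectors by ‖(z, b)‖_G² := ρ‖z‖² + (1/ρ)‖b‖². Then m_f‖X′ − X*‖² ≤ ‖(Z − Z*, β − β*)‖_G² − ‖(Z′ − Z*, β′ − β*)‖_G² − ‖(Z − Z′, β − β′)‖_G² − √2·⟨X′ − X*, v⟩. -/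
open Matrix

lemma adj_helper {n m : ℕ} (A : Matrix (Fin n) (Fin m) ℝ)
    (x : EuclideanSpace ℝ (Fin m)) (y : EuclideanSpace ℝ (Fin n)) :
    (inner ℝ (A.toEuclideanLin x) y : ℝ) = inner ℝ x (Aᵀ.toEuclideanLin y) := by
  have : Aᵀ = Aᴴ := by ext i j; simp [conjTranspose_apply]
  rw [this, Matrix.toEuclideanLin_conjTranspose_eq_adjoint,
    LinearMap.adjoint_inner_right]

theorem stmt_4 {n m : ℕ} (Mp Mm : Matrix (Fin n) (Fin m) ℝ) (ρ mf : ℝ)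
    (hρ : 0 < ρ) (hmf : 0 < mf)
    (h X' Xs v : EuclideanSpace ℝ (Fin n)) (Z Z' Zs β β' βs : EuclideanSpace ℝ (Fin m))
    (hi : (inner ℝ h (X' - Xs) : ℝ) ≥ mf * ‖X' - Xs‖ ^ 2)
    (hii : h = ρ • Mp.toEuclideanLin (Z - Z') - Mm.toEuclideanLin (β' - βs)
      - Real.sqrt 2 • v)
    (hiii : β' - β = (ρ / 2) • Mmᵀ.toEuclideanLin (X' - Xs))
    (hiv : Z' - Zs = (1 / 2 : ℝ) • Mpᵀ.toEuclideanLin (X' - Xs)) :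
    mf * ‖X' - Xs‖ ^ 2 ≤
      (ρ * ‖Z - Zs‖ ^ 2 + (1 / ρ) * ‖β - βs‖ ^ 2)
      - (ρ * ‖Z' - Zs‖ ^ 2 + (1 / ρ) * ‖β' - βs‖ ^ 2)
      - (ρ * ‖Z - Z'‖ ^ 2 + (1 / ρ) * ‖β - β'‖ ^ 2)
      - Real.sqrt 2 * (inner ℝ (X' - Xs) v : ℝ) := by
  set x := X' - Xs with hx
  have h1 : (inner ℝ (Mp.toEuclideanLin (Z - Z')) x : ℝ)
      = 2 * inner ℝ (Z - Z') (Z' - Zs) := by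
    have e : Mpᵀ.toEuclideanLin x = (2 : ℝ) • (Z' - Zs) := by
      rw [hiv, smul_smul]; norm_num
    rw [adj_helper, e, real_inner_smul_right]
  have h2 : (inner ℝ (Mm.toEuclideanLin (β' - βs)) x : ℝ)
      = (2 / ρ) * inner ℝ (β' - βs) (β' - β) := by
    have : Mmᵀ.toEuclideanLin x = (2 / ρ) • (β' - β) := by
      rw [hiii, smul_smul]
      rw [show (2 / ρ) * (ρ / 2) = 1 by field_simp]; simp
    rw [adj_helper, this, real_inner_smul_right]
  have hineq : mf * ‖x‖ ^ 2 ≤ ρ * (2 * inner ℝ (Z - Z') (Z' - Zs))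
      - (2 / ρ) * (inner ℝ (β' - βs) (β' - β) : ℝ) - Real.sqrt 2 * inner ℝ x v := by
    have := hi
    rw [hii, sub_sub, inner_sub_left, inner_add_left, real_inner_smul_left,
      real_inner_smul_left, h1, h2] at this
    rw [real_inner_comm x v] at this
    linarith
  have e1 : ‖Z - Zs‖ ^ 2 = ‖Z - Z'‖ ^ 2 + 2 * inner ℝ (Z - Z') (Z' - Zs)
      + ‖Z' - Zs‖ ^ 2 := by
    have := norm_add_sq_real (Z - Z') (Z' - Zs)
    rw [show Z - Z' + (Z' - Zs) = Z - Zs by abel] at this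
    linarith
  have e2 : ‖β - βs‖ ^ 2 = ‖β' - βs‖ ^ 2 - 2 * inner ℝ (β' - βs) (β' - β)
      + ‖β' - β‖ ^ 2 := by
    have := norm_sub_sq_real (β' - βs) (β' - β)
    rw [show β' - βs - (β' - β) = β - βs by abel] at this
    linarith
  have e3 : ‖β - β'‖ = ‖β' - β‖ := norm_sub_rev _ _
  have hρ' : (1 : ℝ) / ρ * ρ = 1 := by field_simp
  rw [e3]
  have : ρ * ‖Z - Zs‖ ^ 2 - ρ * ‖Z' - Zs‖ ^ 2 - ρ * ‖Z - Z'‖ ^ 2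
      = ρ * (2 * inner ℝ (Z - Z') (Z' - Zs)) := by rw [e1]; ring
  have h2' : (1 / ρ) * ‖β - βs‖ ^ 2 - (1 / ρ) * ‖β' - βs‖ ^ 2
      - (1 / ρ) * ‖β' - β‖ ^ 2 = -((2 / ρ) * inner ℝ (β' - βs) (β' - β)) := by
    rw [e2]; ring
  linarith
end

section
/- Let M₊, M₋ be real n × m matrices, ρ > 0, M_f > 0, κ > 1, s₊ > 0, s₋ > 0, and let h, X′, X*, v ∈ ℝⁿ and Z, Z′, β′, β* ∈ ℝᵐ satisfy: (i) ‖h‖ ≤ M_f‖X′ − X*‖; (ii) h = ρ·M₊·(Z − Z′) − M₋·(β′ − β*) − √2·v; (iii) ‖M₊·u‖ ≤ s₊‖u‖ for all u ∈ ℝᵐ; (iv) s₋·‖β′ − β*‖ ≤ ‖M₋·(β′ − β*)‖. Then (ρκs₊²/((κ−1)s₋²))·‖Z′ − Z‖² + (κM_f²/(ρs₋²))·‖X′ − X*‖² ≥ (1/ρ)·‖β′ − β*‖² − (2√2/(ρs₋²))·‖M₋·(β′ − β*)‖·‖v‖ + (2/(ρs₋²))·‖v‖². -/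
open Matrix

set_option maxHeartbeats 1000000 in
theorem stmt_6 {n m : ℕ} (Mp Mm : Matrix (Fin n) (Fin m) ℝ) (ρ Mf κ sp sm : ℝ)
    (hρ : 0 < ρ) (hMf : 0 < Mf) (hκ : 1 < κ) (hsp : 0 < sp) (hsm : 0 < sm)
    (h X' Xs v : EuclideanSpace ℝ (Fin n)) (Z Z' β' βs : EuclideanSpace ℝ (Fin m))
    (hi : ‖h‖ ≤ Mf * ‖X' - Xs‖)
    (hii : h = ρ • Mp.toEuclideanLin (Z - Z') - Mm.toEuclideanLin (β' - βs)
      - Real.sqrt 2 • v)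
    (hiii : ∀ u : EuclideanSpace ℝ (Fin m), ‖Mp.toEuclideanLin u‖ ≤ sp * ‖u‖)
    (hiv : sm * ‖β' - βs‖ ≤ ‖Mm.toEuclideanLin (β' - βs)‖) :
    (ρ * κ * sp ^ 2 / ((κ - 1) * sm ^ 2)) * ‖Z' - Z‖ ^ 2
      + (κ * Mf ^ 2 / (ρ * sm ^ 2)) * ‖X' - Xs‖ ^ 2 ≥
    (1 / ρ) * ‖β' - βs‖ ^ 2
      - (2 * Real.sqrt 2 / (ρ * sm ^ 2)) * ‖Mm.toEuclideanLin (β' - βs)‖ * ‖v‖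
      + (2 / (ρ * sm ^ 2)) * ‖v‖ ^ 2 := by
  have hκ1 : (0:ℝ) < κ - 1 := by linarith
  set A := Mm.toEuclideanLin (β' - βs) with hA
  set P := Mp.toEuclideanLin (Z - Z') with hP
  have hsqrt2 : (0:ℝ) ≤ Real.sqrt 2 := Real.sqrt_nonneg 2
  have hsq2 : Real.sqrt 2 ^ 2 = 2 := Real.sq_sqrt (by norm_num)
  have hZn : ‖P‖ ≤ sp * ‖Z' - Z‖ := by
    have := hiii (Z - Z')
    rwa [norm_sub_rev Z Z'] at this
  have heq : A + Real.sqrt 2 • v = ρ • P - h := by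
    rw [hii]; abel
  have hnorms : ‖Real.sqrt 2 • v‖ = Real.sqrt 2 * ‖v‖ := by
    rw [norm_smul, Real.norm_eq_abs, abs_of_nonneg hsqrt2]
  have hub : ‖A + Real.sqrt 2 • v‖ ≤ ρ * (sp * ‖Z' - Z‖) + Mf * ‖X' - Xs‖ := by
    rw [heq]
    calc ‖ρ • P - h‖ ≤ ‖ρ • P‖ + ‖h‖ := norm_sub_le _ _
      _ ≤ ρ * (sp * ‖Z' - Z‖) + Mf * ‖X' - Xs‖ := by
        rw [norm_smul, Real.norm_eq_abs, abs_of_pos hρ]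
        exact add_le_add (by nlinarith) hi
  have hlb1 : ‖A‖ - Real.sqrt 2 * ‖v‖ ≤ ‖A + Real.sqrt 2 • v‖ := by
    have := norm_sub_norm_le A (-(Real.sqrt 2 • v))
    simp only [sub_neg_eq_add, norm_neg] at this
    linarith [hnorms.le]
  have hlb2 : Real.sqrt 2 * ‖v‖ - ‖A‖ ≤ ‖A + Real.sqrt 2 • v‖ := by
    have := norm_sub_norm_le (Real.sqrt 2 • v) (-A)
    simp only [sub_neg_eq_add, norm_neg] at this
    rw [add_comm] at this
    linarith [hnorms.le]
  have hsq : (‖A‖ - Real.sqrt 2 * ‖v‖) ^ 2 ≤ ‖A + Real.sqrt 2 • v‖ ^ 2 :=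
    sq_le_sq' (by linarith) hlb1
  have hT : ‖A + Real.sqrt 2 • v‖ ^ 2 ≤ (ρ * (sp * ‖Z' - Z‖) + Mf * ‖X' - Xs‖) ^ 2 := by
    apply sq_le_sq' _ hub
    have := norm_nonneg (A + Real.sqrt 2 • v)
    nlinarith [norm_nonneg (Z' - Z), norm_nonneg (X' - Xs), hsp.le, hρ.le, hMf.le]
  -- abstract all norms into real variables
  obtain ⟨a, ha, haeq⟩ : ∃ a, 0 ≤ a ∧ ‖A‖ = a := ⟨_, norm_nonneg A, rfl⟩
  obtain ⟨w, hw, hweq⟩ : ∃ w, 0 ≤ w ∧ ‖v‖ = w := ⟨_, norm_nonneg v, rfl⟩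
  obtain ⟨z, hz, hzeq⟩ : ∃ z, 0 ≤ z ∧ ‖Z' - Z‖ = z := ⟨_, norm_nonneg _, rfl⟩
  obtain ⟨x, hx, hxeq⟩ : ∃ x, 0 ≤ x ∧ ‖X' - Xs‖ = x := ⟨_, norm_nonneg _, rfl⟩
  obtain ⟨b, hb, hbeq⟩ : ∃ b, 0 ≤ b ∧ ‖β' - βs‖ = b := ⟨_, norm_nonneg _, rfl⟩
  simp only [haeq, hweq, hzeq, hxeq, hbeq] at hsq hT hiv ⊢
  obtain ⟨q, hq, hqeq⟩ : ∃ q, 0 ≤ q ∧ ‖A + Real.sqrt 2 • v‖ = q := ⟨_, norm_nonneg _, rfl⟩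
  rw [hqeq] at hsq hT
  clear hA hP hii heq hub hlb1 hlb2 hnorms hi hiii hZn hqeq
  clear haeq hweq hzeq hxeq hbeq A P h X' Xs v Z Z' β' βs Mp Mm
  have hyoung : (ρ * (sp * z) + Mf * x) ^ 2 ≤
      κ / (κ - 1) * (ρ ^ 2 * sp ^ 2 * z ^ 2) + κ * (Mf ^ 2 * x ^ 2) := by
    rw [div_mul_eq_mul_div, div_add' _ _ _ hκ1.ne', le_div_iff₀ hκ1]
    nlinarith [sq_nonneg (ρ * (sp * z) - (κ - 1) * (Mf * x))]
  have key : sm ^ 2 * b ^ 2 - 2 * Real.sqrt 2 * a * w + 2 * w ^ 2 ≤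
      κ / (κ - 1) * (ρ ^ 2 * sp ^ 2 * z ^ 2) + κ * (Mf ^ 2 * x ^ 2) := by
    have hba : sm ^ 2 * b ^ 2 ≤ a ^ 2 := by
      have := mul_le_mul hiv hiv (mul_nonneg hsm.le hb) ha
      nlinarith [this]
    have hid : (a - Real.sqrt 2 * w) ^ 2 = a ^ 2 - 2 * Real.sqrt 2 * a * w + 2 * w ^ 2 := by
      linear_combination w ^ 2 * hsq2
    linarith [hba, hsq, hT, hyoung, hid]
  rw [ge_iff_le, ← sub_nonneg]
  have hexp : (ρ * κ * sp ^ 2 / ((κ - 1) * sm ^ 2)) * z ^ 2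
      + (κ * Mf ^ 2 / (ρ * sm ^ 2)) * x ^ 2
      - ((1 / ρ) * b ^ 2 - (2 * Real.sqrt 2 / (ρ * sm ^ 2)) * a * w
        + (2 / (ρ * sm ^ 2)) * w ^ 2)
      = (1 / (ρ * sm ^ 2)) * ((κ / (κ - 1) * (ρ ^ 2 * sp ^ 2 * z ^ 2)
        + κ * (Mf ^ 2 * x ^ 2))
        - (sm ^ 2 * b ^ 2 - 2 * Real.sqrt 2 * a * w + 2 * w ^ 2)) := by
    field_simp
  rw [hexp]
  apply mul_nonneg
  · positivity
  · linarith
end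

section
/- Let τ_G > 0 and τ_f > 0 be real numbers. Then for every real κ > 1, min{ (κ − 1)/(κ·τ_G²), 1/(√κ·τ_f·τ_G) } ≤ (1/(2τ_f))·√(1/τ_f² + 4/τ_G²) − 1/(2τ_f²). -/
theorem stmt_17 (τG τf : ℝ) (hτG : 0 < τG) (hτf : 0 < τf) :
    ∀ κ : ℝ, 1 < κ →
      min ((κ - 1) / (κ * τG ^ 2)) (1 / (Real.sqrt κ * τf * τG)) ≤
        (1 / (2 * τf)) * Real.sqrt (1 / τf ^ 2 + 4 / τG ^ 2) - 1 / (2 * τf ^ 2) := by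
  intro κ hκ
  set s := Real.sqrt (1 / τf ^ 2 + 4 / τG ^ 2) with hs
  have hspos : 0 < (1 : ℝ) / τf ^ 2 + 4 / τG ^ 2 := by positivity
  have hs2 : s ^ 2 = 1 / τf ^ 2 + 4 / τG ^ 2 := Real.sq_sqrt hspos.le
  have hsp : 0 < s := Real.sqrt_pos.mpr hspos
  set δ := 1 / (2 * τf) * s - 1 / (2 * τf ^ 2) with hδ
  have hkey : s ^ 2 * τf ^ 2 * τG ^ 2 = τG ^ 2 + 4 * τf ^ 2 := by
    field_simp at hs2; linarith
  have h1' : 1 < (τf * s) ^ 2 := by nlinarith [hkey, pow_pos hτG 2, pow_pos hτf 2]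
  have h1 : 1 < τf * s := by nlinarith [mul_pos hτf hsp]
  have hδpos : 0 < δ := by
    have he : δ = (τf * s - 1) / (2 * τf ^ 2) := by rw [hδ]; field_simp
    rw [he]; exact div_pos (by linarith) (by positivity)
  have hid : δ * τG ^ 2 + δ ^ 2 * τf ^ 2 * τG ^ 2 = 1 := by
    rw [hδ]; field_simp
    linear_combination hkey
  rcases le_or_gt (1 / (Real.sqrt κ * τf * τG)) δ with h | h
  · exact le_trans (min_le_right _ _) h
  · refine le_trans (min_le_left _ _) ?_
    have hκ0 : (0:ℝ) < κ := by linarith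
    have hrk : 0 < Real.sqrt κ := Real.sqrt_pos.mpr hκ0
    have hrk2 : Real.sqrt κ ^ 2 = κ := Real.sq_sqrt hκ0.le
    have hx : 0 < δ * (Real.sqrt κ * τf * τG) := by positivity
    have h1d : δ * (Real.sqrt κ * τf * τG) < 1 := by
      rw [lt_div_iff₀ (by positivity)] at h; linarith
    have h2' : (δ * (Real.sqrt κ * τf * τG)) ^ 2 < 1 := by nlinarith [hx, h1d]
    have heq : (δ * (Real.sqrt κ * τf * τG)) ^ 2 = κ * (δ ^ 2 * τf ^ 2 * τG ^ 2) := by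
      rw [mul_pow, mul_pow, mul_pow, hrk2]; ring
    have h2 : κ * (δ ^ 2 * τf ^ 2 * τG ^ 2) < 1 := heq ▸ h2'
    have h4 : κ * (δ * τG ^ 2) + κ * (δ ^ 2 * τf ^ 2 * τG ^ 2) = κ := by
      linear_combination κ * hid
    rw [div_le_iff₀ (by positivity)]
    nlinarith [h4, h2]
end
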